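/- For any countable alphabet Σ and any probability distribution p on Σ, there exists a sequence s : ℕ → Σ such that s has density p and for all M, N ∈ ℕ and all σ ∈ Σ, | |{i : M ≤ i < M+N, s(i) = σ}|/N − p(σ) | < 2/N. -/

import Mathlib

open Filter Set
open scoped Classical

namespace LowDisc

variable {α : Type*}

/-- Deadline of the next occurrence of letter `k`, given current counts `c`. -/
noncomputable def dl (p : α → ℝ) (c : α →₀ ℕ) (k : α) : ℕ :=
  sInf {d : ℕ | ((c k : ℝ) + 1) < (d : ℝ) * p k}

/-- Eligibility of `k` to be placed at step `m` (keeping the upper quota). -/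
def elig (p : α → ℝ) (m : ℕ) (c : α →₀ ℕ) (k : α) : Prop :=
  (c k : ℝ) < ((m : ℝ) + 1) * p k

def pickSpec (p : α → ℝ) (m : ℕ) (c : α →₀ ℕ) (k : α) : Prop :=
  elig p m c k ∧ ∀ k', elig p m c k' → dl p c k ≤ dl p c k'

noncomputable def pick [Nonempty α] (p : α → ℝ) (m : ℕ) (c : α →₀ ℕ) : α :=
  if h : ∃ k, pickSpec p m c k then h.choose else Classical.arbitrary α

noncomputable def cnt [Nonempty α] (p : α → ℝ) : ℕ → (α →₀ ℕ)
  | 0 => 0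
  | n + 1 => cnt p n + Finsupp.single (pick p n (cnt p n)) 1

noncomputable def seq [Nonempty α] (p : α → ℝ) (n : ℕ) : α := pick p n (cnt p n)

section basic

variable [Nonempty α] (p : α → ℝ)

lemma cnt_succ (n : ℕ) : cnt p (n + 1) = cnt p n + Finsupp.single (seq p n) 1 := rfl

lemma cnt_succ_apply (n : ℕ) (k : α) :
    cnt p (n + 1) k = cnt p n k + if seq p n = k then 1 else 0 := by
  rw [cnt_succ, Finsupp.add_apply, Finsupp.single_apply]

lemma cnt_mono {m m' : ℕ} (h : m ≤ m') (k : α) : cnt p m k ≤ cnt p m' k := by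
  induction m' with
  | zero =>
    have : m = 0 := Nat.le_zero.mp h
    rw [this]
  | succ n ih =>
    rcases Nat.lt_or_ge m (n+1) with h' | h'
    · have := ih (by omega)
      rw [cnt_succ_apply]
      split <;> omega
    · have : m = n + 1 := by omega
      subst this; rfl

lemma cnt_sum (n : ℕ) : (cnt p n).sum (fun _ v => v) = n := by
  induction n with
  | zero => simp [cnt]
  | succ n ih =>
    rw [cnt_succ, Finsupp.sum_add_index' (fun _ => rfl) (fun _ _ _ => rfl),
      Finsupp.sum_single_index rfl, ih]

/-- Constancy of counts on an interval with no occurrence of `k`. -/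
lemma cnt_constant {m m' : ℕ} (k : α) (h : m ≤ m')
    (hne : ∀ t, m ≤ t → t < m' → seq p t ≠ k) : cnt p m' k = cnt p m k := by
  induction m' with
  | zero =>
    have : m = 0 := Nat.le_zero.mp h
    rw [this]
  | succ n ih =>
    rcases Nat.lt_or_ge m (n+1) with h' | h'
    · have hm : m ≤ n := by omega
      rw [cnt_succ_apply, ih hm (fun t ht ht' => hne t ht (by omega)),
        if_neg (hne n hm (by omega)), Nat.add_zero]
    · have : m = n + 1 := by omega
      subst this; rfl

lemma exists_window_occ {m m' : ℕ} (k : α) (h : m ≤ m')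
    (hlt : cnt p m k < cnt p m' k) : ∃ t, m ≤ t ∧ t < m' ∧ seq p t = k := by
  by_contra hc
  push_neg at hc
  rw [cnt_constant p k h hc] at hlt
  omega

lemma dl_le_iff (c : α →₀ ℕ) {k : α} (hpk : 0 < p k) (n : ℕ) :
    dl p c k ≤ n ↔ ((c k : ℝ) + 1) < (n : ℝ) * p k := by
  have hne : {d : ℕ | ((c k : ℝ) + 1) < (d : ℝ) * p k}.Nonempty := by
    obtain ⟨d, hd⟩ := exists_nat_gt (((c k : ℝ) + 1) / p k)
    exact ⟨d, by rwa [div_lt_iff₀ hpk] at hd⟩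
  constructor
  · intro h
    have hmem := Nat.sInf_mem hne
    have : ((dl p c k : ℝ)) * p k ≤ (n : ℝ) * p k := by
      apply mul_le_mul_of_nonneg_right _ hpk.le
      exact_mod_cast h
    exact lt_of_lt_of_le hmem this
  · intro h
    exact Nat.sInf_le h

lemma elig_pos {m : ℕ} {c : α →₀ ℕ} {k : α} (h : elig p m c k) : 0 < p k := by
  by_contra hc
  push_neg at hc
  have h0 : ((m : ℝ) + 1) * p k ≤ 0 := mul_nonpos_of_nonneg_of_nonpos (by positivity) hc
  have : (0 : ℝ) ≤ (c k : ℝ) := by positivity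
  unfold elig at h
  linarith

lemma pickSpec_exists {m : ℕ} {c : α →₀ ℕ} (h : ∃ k, elig p m c k) :
    ∃ k, pickSpec p m c k := by
  have hne : (dl p c '' {k | elig p m c k}).Nonempty := by
    obtain ⟨k, hk⟩ := h
    exact ⟨dl p c k, Set.mem_image_of_mem _ hk⟩
  obtain ⟨k, hk, hdl⟩ := Nat.sInf_mem hne
  refine ⟨k, hk, fun k' hk' => ?_⟩
  rw [hdl]
  exact Nat.sInf_le ⟨k', hk', rfl⟩

end basic

section withsum

variable [Nonempty α] {p : α → ℝ} (hp0 : ∀ σ, 0 ≤ p σ) (hp1 : HasSum p 1)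

include hp0 hp1

lemma cnt_hasSum (n : ℕ) : HasSum (fun k => (cnt p n k : ℝ)) (n : ℝ) := by
  have h := hasSum_sum_of_ne_finset_zero (s := (cnt p n).support)
    (f := fun k => (cnt p n k : ℝ)) (L := SummationFilter.unconditional α) (by
      intro b hb
      simp [Finsupp.notMem_support_iff.mp hb])
  have : ∑ b ∈ (cnt p n).support, (cnt p n b : ℝ) = (n : ℝ) := by
    rw [← Nat.cast_sum]
    exact_mod_cast congrArg (Nat.cast (R := ℝ)) (cnt_sum p n)
  rwa [this] at h

lemma elig_exists (m : ℕ) : ∃ k, elig p m (cnt p m) k := by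
  by_contra hc
  push_neg at hc
  unfold elig at hc
  push_neg at hc
  have h1 : HasSum (fun k => ((m : ℝ) + 1) * p k) ((m : ℝ) + 1) := by
    simpa using hp1.mul_left ((m : ℝ) + 1)
  have h2 := cnt_hasSum hp0 hp1 m
  have := hasSum_le hc h1 h2
  linarith

lemma pick_spec (m : ℕ) : pickSpec p m (cnt p m) (seq p m) := by
  have h := pickSpec_exists p (elig_exists hp0 hp1 m)
  rw [seq, pick, dif_pos h]
  exact h.choose_spec

lemma seq_elig (m : ℕ) : elig p m (cnt p m) (seq p m) := (pick_spec hp0 hp1 m).1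

/-- Upper quota. -/
lemma cnt_lt (n : ℕ) (k : α) : (cnt p n k : ℝ) < (n : ℝ) * p k + 1 := by
  induction n with
  | zero => simp [cnt]
  | succ n ih =>
    have hp := hp0 k
    rw [cnt_succ_apply]
    by_cases h : seq p n = k
    · have he := seq_elig hp0 hp1 n
      rw [h] at he
      unfold elig at he
      rw [if_pos h]
      push_cast
      linarith
    · rw [if_neg h]
      push_cast
      linarith

/-- Lower quota: the key EDF lemma. -/
lemma le_cnt (n : ℕ) (k0 : α) : (n : ℝ) * p k0 - 1 ≤ (cnt p n k0 : ℝ) := by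
  by_contra hviol
  push_neg at hviol
  classical
  set c : ℕ → α →₀ ℕ := cnt p with hc
  set s : ℕ → α := seq p with hs
  -- find the last "bad" slot (where the placed letter has deadline after n)
  obtain ⟨tbar, htn, hgood, hlast⟩ : ∃ tbar, tbar ≤ n ∧
      (∀ t, tbar ≤ t → t < n → (c t (s t) : ℝ) + 1 < (n : ℝ) * p (s t)) ∧
      (tbar ≠ 0 → (n : ℝ) * p (s (tbar - 1)) ≤ (c (tbar - 1) (s (tbar - 1)) : ℝ) + 1) := by
    by_cases hTn : ∃ t, t < n ∧ (n : ℝ) * p (s t) ≤ (c t (s t) : ℝ) + 1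
    · obtain ⟨t0, ht0n, ht0b⟩ := hTn
      set P : ℕ → Prop := fun t => (n : ℝ) * p (s t) ≤ (c t (s t) : ℝ) + 1 with hP
      have hfg : P (Nat.findGreatest P (n-1)) :=
        Nat.findGreatest_spec (m := t0) (by omega) ht0b
      have hfgle : Nat.findGreatest P (n-1) ≤ n - 1 := Nat.findGreatest_le _
      refine ⟨Nat.findGreatest P (n-1) + 1, by omega, ?_, fun _ => by simpa using hfg⟩
      intro t ht htn'
      by_contra hcon
      push_neg at hcon
      exact absurd hcon
        (Nat.findGreatest_is_greatest (P := P) (n := n - 1) (k := t) (by omega) (by omega))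
    · push_neg at hTn
      exact ⟨0, Nat.zero_le n, fun t _ ht => hTn t ht, fun h => absurd rfl h⟩
  -- EDF property at the last bad slot
  have hedf : ∀ k, tbar ≠ 0 → elig p (tbar - 1) (c (tbar - 1)) k →
      (n : ℝ) * p k ≤ (c (tbar - 1) k : ℝ) + 1 := by
    intro k h0 helig
    have hbad := hlast h0
    by_contra hcon
    push_neg at hcon
    have hdlk : dl p (c (tbar - 1)) k ≤ n :=
      (dl_le_iff p (c (tbar - 1)) (elig_pos p helig) n).mpr hcon
    have hspec := pick_spec hp0 hp1 (tbar - 1)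
    have hdls : dl p (c (tbar - 1)) (s (tbar - 1)) ≤ dl p (c (tbar - 1)) k :=
      hspec.2 k helig
    have hps : 0 < p (s (tbar - 1)) := elig_pos p hspec.1
    have := (dl_le_iff p (c (tbar - 1)) hps n).mp (le_trans hdls hdlk)
    linarith
  -- Claim A: any letter whose next deadline is ≤ n was released after tbar
  have claimA : ∀ k t, tbar ≤ t → t ≤ n → ((c t k : ℝ) + 1) < (n : ℝ) * p k →
      (tbar : ℝ) * p k ≤ (c t k : ℝ) := by
    intro k t ht htn' hdead
    rcases Nat.eq_zero_or_pos tbar with h0 | h0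
    · rw [h0]; simp
    · by_contra hcon
      push_neg at hcon
      have hb : tbar - 1 ≤ t := by omega
      have hmono : (c (tbar - 1) k : ℝ) ≤ (c t k : ℝ) := by
        exact_mod_cast cnt_mono p hb k
      have helig : elig p (tbar - 1) (c (tbar - 1)) k := by
        unfold elig
        have he : ((tbar - 1 : ℕ) : ℝ) + 1 = (tbar : ℝ) := by
          have h1 : (1 : ℕ) ≤ tbar := h0
          push_cast [Nat.cast_sub h1]
          ring
        rw [he]
        linarith
      have := hedf k (by omega) helig
      linarith
  -- final counting
  set S : Finset α := (c n).support ∪ {k0} with hS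
  have hk0S : k0 ∈ S := by simp [hS]
  have hsub : (c tbar).support ⊆ (c n).support := by
    intro x hx
    rw [Finsupp.mem_support_iff] at hx ⊢
    have h2 : c tbar x ≤ c n x := cnt_mono p htn x
    omega
  -- sums of counts over S
  have hsumn : ∑ k ∈ S, (c n k : ℝ) = (n : ℝ) := by
    rw [← Finset.sum_subset (Finset.subset_union_left (s₂ := {k0}))]
    · rw [← Nat.cast_sum]
      exact_mod_cast congrArg (Nat.cast (R := ℝ)) (cnt_sum p n)
    · intro x _ hx
      rw [Finsupp.notMem_support_iff.mp hx]
      simp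
  have hsumt : ∑ k ∈ S, (c tbar k : ℝ) = (tbar : ℝ) := by
    rw [← Finset.sum_subset (hsub.trans (Finset.subset_union_left (s₂ := {k0})))]
    · rw [← Nat.cast_sum]
      exact_mod_cast congrArg (Nat.cast (R := ℝ)) (cnt_sum p tbar)
    · intro x _ hx
      rw [Finsupp.notMem_support_iff.mp hx]
      simp
  have hsumind : ∑ k ∈ S, (if k = k0 then (1:ℝ) else 0) = 1 := by
    rw [Finset.sum_ite_eq' S k0 (fun _ => (1:ℝ))]
    simp [hk0S]
  -- the per-letter bound
  have hperk : ∀ k ∈ S, (c n k : ℝ) - (c tbar k : ℝ) + (if k = k0 then (1:ℝ) else 0)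
      ≤ ((n : ℝ) - (tbar : ℝ)) * p k := by
    intro k _
    by_cases hk : k = k0
    · subst hk
      rw [if_pos rfl]
      have h1 : (c n k : ℝ) + 1 < (n : ℝ) * p k := by linarith
      have h2 : (tbar : ℝ) * p k ≤ (c tbar k : ℝ) := by
        apply claimA k tbar le_rfl htn
        have : (c tbar k : ℝ) ≤ (c n k : ℝ) := by exact_mod_cast cnt_mono p htn k
        linarith
      linarith
    · rw [if_neg hk]
      rcases Nat.lt_or_ge (c tbar k) (c n k) with hlt | hge
      · obtain ⟨t1, ht1a, ht1b, ht1c⟩ := exists_window_occ p k htn hlt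
        set W : Finset ℕ := (Finset.Ico tbar n).filter (fun t => s t = k) with hW
        have hWne : W.Nonempty :=
          ⟨t1, by rw [hW, Finset.mem_filter, Finset.mem_Ico]; exact ⟨⟨ht1a, ht1b⟩, ht1c⟩⟩
        obtain ⟨u1, hu1mem', hu1min⟩ := W.exists_min_image id hWne
        obtain ⟨u2, hu2mem', hu2max⟩ := W.exists_max_image id hWne
        have hu1mem : (tbar ≤ u1 ∧ u1 < n) ∧ s u1 = k := by
          have := hu1mem'
          rw [hW, Finset.mem_filter, Finset.mem_Ico] at this
          exact this
        have hu2mem : (tbar ≤ u2 ∧ u2 < n) ∧ s u2 = k := by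
          have := hu2mem'
          rw [hW, Finset.mem_filter, Finset.mem_Ico] at this
          exact this
        -- counts constant on [tbar, u1)
        have hcu1 : c u1 k = c tbar k := by
          apply cnt_constant p k hu1mem.1.1
          intro t ht htu1 hst
          have htW : t ∈ W := by
            rw [hW, Finset.mem_filter, Finset.mem_Ico]
            exact ⟨⟨ht, by omega⟩, hst⟩
          have := hu1min t htW
          simp only [id] at this
          omega
        -- counts constant on [u2+1, n)
        have hcu2 : c n k = c u2 k + 1 := by
          have h1 : c n k = c (u2 + 1) k := by
            apply cnt_constant p k (by omega)
            intro t ht htn' hst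
            have htW : t ∈ W := by
              rw [hW, Finset.mem_filter, Finset.mem_Ico]
              exact ⟨⟨by omega, htn'⟩, hst⟩
            have := hu2max t htW
            simp only [id] at this
            omega
          have h2 : c (u2 + 1) k = c u2 k + 1 := by
            rw [hc, cnt_succ_apply, ← hs, if_pos hu2mem.2]
          omega
        have hgood1 := hgood u1 hu1mem.1.1 hu1mem.1.2
        have hgood2 := hgood u2 hu2mem.1.1 hu2mem.1.2
        rw [hu1mem.2] at hgood1
        rw [hu2mem.2] at hgood2
        have hA : (tbar : ℝ) * p k ≤ (c u1 k : ℝ) :=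
          claimA k u1 hu1mem.1.1 (by omega) hgood1
        have e1 : (c u1 k : ℝ) = (c tbar k : ℝ) := by exact_mod_cast hcu1
        have e2 : (c n k : ℝ) = (c u2 k : ℝ) + 1 := by exact_mod_cast hcu2
        linarith
      · have hle : (c n k : ℝ) ≤ (c tbar k : ℝ) := by exact_mod_cast hge
        have hnn : (0:ℝ) ≤ ((n : ℝ) - (tbar : ℝ)) * p k := by
          apply mul_nonneg _ (hp0 k)
          have : (tbar : ℝ) ≤ (n : ℝ) := by exact_mod_cast htn
          linarith
        linarith
  have hstrict : ∃ k ∈ S, (c n k : ℝ) - (c tbar k : ℝ) + (if k = k0 then (1:ℝ) else 0)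
      < ((n : ℝ) - (tbar : ℝ)) * p k := by
    refine ⟨k0, hk0S, ?_⟩
    rw [if_pos rfl]
    have h1 : (c n k0 : ℝ) + 1 < (n : ℝ) * p k0 := by linarith
    have h2 : (tbar : ℝ) * p k0 ≤ (c tbar k0 : ℝ) := by
      apply claimA k0 tbar le_rfl htn
      have : (c tbar k0 : ℝ) ≤ (c n k0 : ℝ) := by exact_mod_cast cnt_mono p htn k0
      linarith
    linarith
  -- sum everything up
  have hsum_lt := Finset.sum_lt_sum hperk hstrict
  have hsplit : ∑ k ∈ S, ((c n k : ℝ) - (c tbar k : ℝ) + (if k = k0 then (1:ℝ) else 0))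
      = (n : ℝ) - (tbar : ℝ) + 1 := by
    rw [Finset.sum_add_distrib, Finset.sum_sub_distrib, hsumn, hsumt, hsumind]
  have hrhs : ∑ k ∈ S, ((n : ℝ) - (tbar : ℝ)) * p k ≤ (n : ℝ) - (tbar : ℝ) := by
    rw [← Finset.mul_sum]
    have h1 : ∑ k ∈ S, p k ≤ 1 := sum_le_hasSum S (fun i _ => hp0 i) hp1
    have h2 : (0:ℝ) ≤ (n : ℝ) - (tbar : ℝ) := by
      have : (tbar : ℝ) ≤ (n : ℝ) := by exact_mod_cast htn
      linarith
    nlinarith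
  rw [hsplit] at hsum_lt
  linarith

end withsum


section counting

variable [Nonempty α] (p : α → ℝ)

lemma prefix_ncard (σ : α) (n : ℕ) :
    {i : ℕ | i < n ∧ seq p i = σ}.ncard = cnt p n σ := by
  induction n with
  | zero => simp [cnt]
  | succ n ih =>
    rw [cnt_succ_apply]
    by_cases h : seq p n = σ
    · rw [if_pos h]
      have hset : {i : ℕ | i < n + 1 ∧ seq p i = σ}
          = insert n {i : ℕ | i < n ∧ seq p i = σ} := by
        ext i
        simp only [Set.mem_setOf_eq, Set.mem_insert_iff]
        constructor
        · rintro ⟨hi, hs⟩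
          rcases Nat.lt_or_ge i n with h' | h'
          · exact Or.inr ⟨h', hs⟩
          · exact Or.inl (by omega)
        · rintro (rfl | ⟨hi, hs⟩)
          · exact ⟨by omega, h⟩
          · exact ⟨by omega, hs⟩
      have hfin : {i : ℕ | i < n ∧ seq p i = σ}.Finite :=
        (Set.finite_lt_nat n).subset (fun i hi => hi.1)
      rw [hset, Set.ncard_insert_of_notMem (by simp) hfin, ih]
    · rw [if_neg h]
      have hset : {i : ℕ | i < n + 1 ∧ seq p i = σ} = {i : ℕ | i < n ∧ seq p i = σ} := by
        ext i
        simp only [Set.mem_setOf_eq]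
        constructor
        · rintro ⟨hi, hs⟩
          refine ⟨?_, hs⟩
          rcases Nat.lt_or_ge i n with h' | h'
          · exact h'
          · exfalso
            have : i = n := by omega
            subst this
            exact h hs
        · rintro ⟨hi, hs⟩
          exact ⟨by omega, hs⟩
      rw [hset, ih]
      omega

lemma window_ncard (σ : α) (M N : ℕ) :
    {i : ℕ | M ≤ i ∧ i < M + N ∧ seq p i = σ}.ncard = cnt p (M + N) σ - cnt p M σ := by
  induction N with
  | zero =>
    have : {i : ℕ | M ≤ i ∧ i < M + 0 ∧ seq p i = σ} = (∅ : Set ℕ) := by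
      ext i
      simp only [Set.mem_setOf_eq, Set.mem_empty_iff_false, iff_false, not_and]
      intro h1 h2
      omega
    rw [this]
    simp
  | succ N ih =>
    have hmono : cnt p M σ ≤ cnt p (M + N) σ := cnt_mono p (by omega) σ
    rw [show M + (N + 1) = (M + N) + 1 from rfl, cnt_succ_apply]
    by_cases h : seq p (M + N) = σ
    · rw [if_pos h]
      have hset : {i : ℕ | M ≤ i ∧ i < M + N + 1 ∧ seq p i = σ}
          = insert (M + N) {i : ℕ | M ≤ i ∧ i < M + N ∧ seq p i = σ} := by
        ext i
        simp only [Set.mem_setOf_eq, Set.mem_insert_iff]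
        constructor
        · rintro ⟨hi, hi2, hs⟩
          rcases Nat.lt_or_ge i (M + N) with h' | h'
          · exact Or.inr ⟨hi, h', hs⟩
          · exact Or.inl (by omega)
        · rintro (rfl | ⟨hi, hi2, hs⟩)
          · exact ⟨by omega, by omega, h⟩
          · exact ⟨hi, by omega, hs⟩
      have hfin : {i : ℕ | M ≤ i ∧ i < M + N ∧ seq p i = σ}.Finite :=
        (Set.finite_lt_nat (M + N)).subset (fun i hi => hi.2.1)
      rw [hset, Set.ncard_insert_of_notMem (by simp) hfin, ih]
      omega
    · rw [if_neg h]
      have hset : {i : ℕ | M ≤ i ∧ i < M + N + 1 ∧ seq p i = σ}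
          = {i : ℕ | M ≤ i ∧ i < M + N ∧ seq p i = σ} := by
        ext i
        simp only [Set.mem_setOf_eq]
        constructor
        · rintro ⟨hi, hi2, hs⟩
          refine ⟨hi, ?_, hs⟩
          rcases Nat.lt_or_ge i (M + N) with h' | h'
          · exact h'
          · exfalso
            have : i = M + N := by omega
            subst this
            exact h hs
        · rintro ⟨hi, hi2, hs⟩
          exact ⟨hi, by omega, hs⟩
      rw [hset, ih]
      omega

end counting

end LowDisc

/-- `s` has density `p`: for every character, the frequency of its occurrences among the
first `n` characters tends to `p σ`. -/
def HasDensity {α : Type*} (s : ℕ → α) (p : α → ℝ) : Prop :=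
  ∀ σ : α, Filter.Tendsto
    (fun n : ℕ => ({i : ℕ | i < n ∧ s i = σ}.ncard : ℝ) / (n : ℝ))
    Filter.atTop (nhds (p σ))

/-- **Lemma (after Tijdeman).** For any probability distribution `p` on a countable alphabet
there is a sequence `s` with density `p` such that every window of length `N ≥ 1` starting at any
`M` contains each character `σ` with frequency within `2/N` of `p σ`. -/
theorem exists_low_discrepancy_sequence {α : Type*} [Countable α] (p : α → ℝ)
    (hp0 : ∀ σ, 0 ≤ p σ) (hp1 : HasSum p 1) :
    ∃ s : ℕ → α, HasDensity s p ∧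
      ∀ (M N : ℕ), 0 < N → ∀ σ : α,
        |({i : ℕ | M ≤ i ∧ i < M + N ∧ s i = σ}.ncard : ℝ) / (N : ℝ) - p σ|
          < 2 / (N : ℝ) := by
  have hne : Nonempty α := by
    rcases isEmpty_or_nonempty α with h | h
    · exfalso
      have : (1:ℝ) = 0 := hp1.unique hasSum_empty
      norm_num at this
    · exact h
  haveI := hne
  refine ⟨LowDisc.seq p, ?_, ?_⟩
  · intro σ
    rw [← tendsto_sub_nhds_zero_iff]
    refine squeeze_zero_norm' (a := fun n : ℕ => 1 / (n : ℝ)) ?_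
      tendsto_one_div_atTop_nhds_zero_nat
    filter_upwards [Filter.eventually_ge_atTop 1] with n hn
    have hn0 : (0:ℝ) < (n : ℝ) := by exact_mod_cast hn
    have hcard := LowDisc.prefix_ncard p σ n
    rw [hcard]
    have hU := LowDisc.cnt_lt hp0 hp1 n σ
    have hL := LowDisc.le_cnt hp0 hp1 n σ
    have heq : ((LowDisc.cnt p n σ : ℝ)) / (n : ℝ) - p σ
        = ((LowDisc.cnt p n σ : ℝ) - (n : ℝ) * p σ) / (n : ℝ) := by
      field_simp
    have h1 : |(LowDisc.cnt p n σ : ℝ) - (n : ℝ) * p σ| ≤ 1 :=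
      abs_le.mpr ⟨by linarith, by linarith⟩
    rw [Real.norm_eq_abs, heq, abs_div, abs_of_pos hn0]
    gcongr
  · intro M N hN σ
    have hN0 : (0:ℝ) < (N : ℝ) := by exact_mod_cast hN
    have hmono : LowDisc.cnt p M σ ≤ LowDisc.cnt p (M + N) σ :=
      LowDisc.cnt_mono p (by omega) σ
    have hcard := LowDisc.window_ncard p σ M N
    rw [hcard]
    have hUa := LowDisc.cnt_lt hp0 hp1 (M + N) σ
    have hLa := LowDisc.le_cnt hp0 hp1 (M + N) σ
    have hUb := LowDisc.cnt_lt hp0 hp1 M σ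
    have hLb := LowDisc.le_cnt hp0 hp1 M σ
    have hcast : ((LowDisc.cnt p (M + N) σ - LowDisc.cnt p M σ : ℕ) : ℝ)
        = (LowDisc.cnt p (M + N) σ : ℝ) - (LowDisc.cnt p M σ : ℝ) := by
      push_cast [Nat.cast_sub hmono]
      ring
    have hMN : ((M + N : ℕ) : ℝ) = (M : ℝ) + (N : ℝ) := by push_cast; ring
    rw [hMN] at hUa hLa
    have key : |((LowDisc.cnt p (M + N) σ - LowDisc.cnt p M σ : ℕ) : ℝ) - (N : ℝ) * p σ| < 2 := by
      rw [hcast]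
      rw [abs_lt]
      constructor
      · nlinarith
      · nlinarith
    have heq : ((LowDisc.cnt p (M + N) σ - LowDisc.cnt p M σ : ℕ) : ℝ) / (N : ℝ) - p σ
        = (((LowDisc.cnt p (M + N) σ - LowDisc.cnt p M σ : ℕ) : ℝ) - (N : ℝ) * p σ) / (N : ℝ) := by
      field_simp
    rw [heq, abs_div, abs_of_pos hN0]
    gcongr
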